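/- Let L be an invertible real N×N matrix and let C₁₁ (of size n₁×n₁), A_c and Z (both of size n₂×n₂, with n₁+n₂=N) be symmetric positive definite matrices. Define the block-diagonal matrices D̄ := diag(C₁₁, A_c) and D := diag(C₁₁, Z), and set C := L D̄ Lᵀ and B := L D Lᵀ. Let A be a symmetric positive definite N×N matrix and suppose there are constants 0 < θ₀ ≤ θ₁ with θ₀ vᵀAv ≤ vᵀCv ≤ θ₁ vᵀAv for all v ∈ ℝᴺ, and constants 0 < r₀ ≤ r₁ with r₀ yᵀZy ≤ yᵀA_c y ≤ r₁ yᵀZy for all y ∈ ℝ^{n₂}. Then for all v ∈ ℝᴺ: (θ₀ / max{1, r₁}) vᵀAv ≤ vᵀBv ≤ (θ₁ / min{1, r₀}) vᵀAv; equivalently, (1/θ₁)·min{1, r₀}· vᵀBv ≤ vᵀAv ≤ (1/θ₀)·max{1, r₁}· vᵀBv. -/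

import Mathlib

open Matrix

lemma quad_fromBlocks {n₁ n₂ : ℕ} (C11 : Matrix (Fin n₁) (Fin n₁) ℝ)
    (M : Matrix (Fin n₂) (Fin n₂) ℝ) (w : Fin n₁ ⊕ Fin n₂ → ℝ) :
    w ⬝ᵥ (fromBlocks C11 0 0 M *ᵥ w) =
      (w ∘ Sum.inl) ⬝ᵥ (C11 *ᵥ (w ∘ Sum.inl)) + (w ∘ Sum.inr) ⬝ᵥ (M *ᵥ (w ∘ Sum.inr)) := by
  have hw : w = Sum.elim (w ∘ Sum.inl) (w ∘ Sum.inr) := (Sum.elim_comp_inl_inr w).symm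
  conv_lhs => rw [hw]
  rw [fromBlocks_mulVec, sumElim_dotProduct_sumElim]
  simp [mulVec]

theorem amli_induction_step (n₁ n₂ : ℕ)
    (L : Matrix (Fin n₁ ⊕ Fin n₂) (Fin n₁ ⊕ Fin n₂) ℝ) (hL : IsUnit L.det)
    (C11 : Matrix (Fin n₁) (Fin n₁) ℝ) (hC11 : C11.PosDef)
    (Ac Z : Matrix (Fin n₂) (Fin n₂) ℝ) (hAc : Ac.PosDef) (hZ : Z.PosDef)
    (Dbar D C B : Matrix (Fin n₁ ⊕ Fin n₂) (Fin n₁ ⊕ Fin n₂) ℝ)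
    (hDbar : Dbar = fromBlocks C11 0 0 Ac)
    (hD : D = fromBlocks C11 0 0 Z)
    (hC : C = L * Dbar * Lᵀ)
    (hB : B = L * D * Lᵀ)
    (A : Matrix (Fin n₁ ⊕ Fin n₂) (Fin n₁ ⊕ Fin n₂) ℝ) (hA : A.PosDef)
    (θ0 θ1 : ℝ) (hθ0 : 0 < θ0) (hθ01 : θ0 ≤ θ1)
    (hθlow : ∀ v : Fin n₁ ⊕ Fin n₂ → ℝ, θ0 * (v ⬝ᵥ (A *ᵥ v)) ≤ v ⬝ᵥ (C *ᵥ v))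
    (hθup : ∀ v : Fin n₁ ⊕ Fin n₂ → ℝ, v ⬝ᵥ (C *ᵥ v) ≤ θ1 * (v ⬝ᵥ (A *ᵥ v)))
    (r0 r1 : ℝ) (hr0 : 0 < r0) (hr01 : r0 ≤ r1)
    (hrlow : ∀ y : Fin n₂ → ℝ, r0 * (y ⬝ᵥ (Z *ᵥ y)) ≤ y ⬝ᵥ (Ac *ᵥ y))
    (hrup : ∀ y : Fin n₂ → ℝ, y ⬝ᵥ (Ac *ᵥ y) ≤ r1 * (y ⬝ᵥ (Z *ᵥ y))) :
    ∀ v : Fin n₁ ⊕ Fin n₂ → ℝ,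
      (θ0 / max 1 r1) * (v ⬝ᵥ (A *ᵥ v)) ≤ v ⬝ᵥ (B *ᵥ v) ∧
      v ⬝ᵥ (B *ᵥ v) ≤ (θ1 / min 1 r0) * (v ⬝ᵥ (A *ᵥ v)) ∧
      (1 / θ1) * min 1 r0 * (v ⬝ᵥ (B *ᵥ v)) ≤ v ⬝ᵥ (A *ᵥ v) ∧
      v ⬝ᵥ (A *ᵥ v) ≤ (1 / θ0) * max 1 r1 * (v ⬝ᵥ (B *ᵥ v)) := by
  intro v
  set m : ℝ := min 1 r0 with hm
  set Mx : ℝ := max 1 r1 with hMx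
  have hmpos : 0 < m := lt_min one_pos hr0
  have hMpos : 0 < Mx := lt_of_lt_of_le one_pos (le_max_left _ _)
  have hθ1 : 0 < θ1 := lt_of_lt_of_le hθ0 hθ01
  -- quadratic forms via w = Lᵀ *ᵥ v
  set w : Fin n₁ ⊕ Fin n₂ → ℝ := Lᵀ *ᵥ v with hw
  have key : ∀ (M : Matrix (Fin n₂) (Fin n₂) ℝ),
      v ⬝ᵥ ((L * fromBlocks C11 0 0 M * Lᵀ) *ᵥ v) =
        (w ∘ Sum.inl) ⬝ᵥ (C11 *ᵥ (w ∘ Sum.inl)) + (w ∘ Sum.inr) ⬝ᵥ (M *ᵥ (w ∘ Sum.inr)) := by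
    intro M
    rw [← quad_fromBlocks C11 M w, hw, ← mulVec_mulVec, ← mulVec_mulVec,
      mulVec_transpose, dotProduct_mulVec]
  have hCv : v ⬝ᵥ (C *ᵥ v) =
      (w ∘ Sum.inl) ⬝ᵥ (C11 *ᵥ (w ∘ Sum.inl)) + (w ∘ Sum.inr) ⬝ᵥ (Ac *ᵥ (w ∘ Sum.inr)) := by
    rw [hC, hDbar, key]
  have hBv : v ⬝ᵥ (B *ᵥ v) =
      (w ∘ Sum.inl) ⬝ᵥ (C11 *ᵥ (w ∘ Sum.inl)) + (w ∘ Sum.inr) ⬝ᵥ (Z *ᵥ (w ∘ Sum.inr)) := by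
    rw [hB, hD, key]
  set q1 : ℝ := (w ∘ Sum.inl) ⬝ᵥ (C11 *ᵥ (w ∘ Sum.inl))
  set qz : ℝ := (w ∘ Sum.inr) ⬝ᵥ (Z *ᵥ (w ∘ Sum.inr))
  set qa : ℝ := (w ∘ Sum.inr) ⬝ᵥ (Ac *ᵥ (w ∘ Sum.inr))
  have hq1 : 0 ≤ q1 := by have := hC11.posSemidef.dotProduct_mulVec_nonneg (w ∘ Sum.inl); rwa [star_trivial] at this
  have hqz : 0 ≤ qz := by have := hZ.posSemidef.dotProduct_mulVec_nonneg (w ∘ Sum.inr); rwa [star_trivial] at this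
  have h1 : r0 * qz ≤ qa := hrlow _
  have h2 : qa ≤ r1 * qz := hrup _
  have hm1 : m ≤ 1 := min_le_left _ _
  have hmr : m ≤ r0 := min_le_right _ _
  have hM1 : 1 ≤ Mx := le_max_left _ _
  have hMr : r1 ≤ Mx := le_max_right _ _
  -- sandwich of C by B
  have hCB_low : m * (v ⬝ᵥ (B *ᵥ v)) ≤ v ⬝ᵥ (C *ᵥ v) := by
    rw [hCv, hBv]
    nlinarith [mul_le_mul_of_nonneg_left hmr (le_of_eq rfl)]
  have hCB_up : v ⬝ᵥ (C *ᵥ v) ≤ Mx * (v ⬝ᵥ (B *ᵥ v)) := by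
    rw [hCv, hBv]
    nlinarith
  have hAv : 0 ≤ v ⬝ᵥ (A *ᵥ v) := by have := hA.posSemidef.dotProduct_mulVec_nonneg v; rwa [star_trivial] at this
  have hθl := hθlow v
  have hθu := hθup v
  refine ⟨?_, ?_, ?_, ?_⟩
  · rw [div_mul_eq_mul_div, div_le_iff₀ hMpos]; nlinarith
  · rw [div_mul_eq_mul_div, le_div_iff₀ hmpos]; nlinarith
  · have h3 : m * (v ⬝ᵥ (B *ᵥ v)) ≤ θ1 * (v ⬝ᵥ (A *ᵥ v)) := le_trans hCB_low hθu
    calc (1 / θ1) * m * (v ⬝ᵥ (B *ᵥ v)) = (m * (v ⬝ᵥ (B *ᵥ v))) / θ1 := by ring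
      _ ≤ (θ1 * (v ⬝ᵥ (A *ᵥ v))) / θ1 := by gcongr
      _ = v ⬝ᵥ (A *ᵥ v) := by field_simp
  · have h4 : θ0 * (v ⬝ᵥ (A *ᵥ v)) ≤ Mx * (v ⬝ᵥ (B *ᵥ v)) := le_trans hθl hCB_up
    calc v ⬝ᵥ (A *ᵥ v) = (θ0 * (v ⬝ᵥ (A *ᵥ v))) / θ0 := by field_simp
      _ ≤ (Mx * (v ⬝ᵥ (B *ᵥ v))) / θ0 := by gcongr
      _ = (1 / θ0) * Mx * (v ⬝ᵥ (B *ᵥ v)) := by ring
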